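/- Let P, Q, L be real n×n matrices with P = Pᵀ, Q = Qᵀ and L invertible, with associated quadratic form W(x,x') = ½⟨Px,x⟩ − ⟨Lx,x'⟩ + ½⟨Qx',x'⟩ and free symplectic matrix S_W. Fix a complex number c with |c| = 1 and define, for f a Schwartz function on ℝⁿ, (Ŝf)(x) = c·(2π)^{−n/2}·|det L|^{1/2}·∫_{ℝⁿ} e^{iW(x,x')} f(x') dx'. Then for every z ∈ ℝ²ⁿ and every Schwartz function f, Ŝ(T(z)f) = T(S_W z)(Ŝf) (metaplectic covariance). -/

import Mathlib

open Matrix MeasureTheory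

/-- The Heisenberg–Weyl operator `T(z₀)`, `z₀ = (x₀, p₀)`, acting on functions `f : ℝⁿ → ℂ` by
`T(z₀)f(x) = exp(i(⟨p₀,x⟩ - ½⟨p₀,x₀⟩)) f(x - x₀)`. -/
noncomputable def heisenbergWeyl {n : ℕ} (z₀ : (Fin n → ℝ) × (Fin n → ℝ))
    (f : (Fin n → ℝ) → ℂ) : (Fin n → ℝ) → ℂ := fun x =>
  Complex.exp (Complex.I * ((z₀.2 ⬝ᵥ x : ℝ) - (1 / 2 : ℝ) * (z₀.2 ⬝ᵥ z₀.1 : ℝ)))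
    * f (x - z₀.1)

/-- The free symplectic matrix `S_W = [[L⁻¹Q, L⁻¹],[P L⁻¹ Q - Lᵀ, P L⁻¹]]`. -/
noncomputable def freeSymplectic {n : ℕ} (P L Q : Matrix (Fin n) (Fin n) ℝ) :
    Matrix (Fin n ⊕ Fin n) (Fin n ⊕ Fin n) ℝ :=
  Matrix.fromBlocks (L⁻¹ * Q) L⁻¹ (P * L⁻¹ * Q - Lᵀ) (P * L⁻¹)

/-- The action of a `2n × 2n` matrix on `ℝⁿ × ℝⁿ`. -/
def matAction {n : ℕ} (S : Matrix (Fin n ⊕ Fin n) (Fin n ⊕ Fin n) ℝ)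
    (z : (Fin n → ℝ) × (Fin n → ℝ)) : (Fin n → ℝ) × (Fin n → ℝ) :=
  (S.mulVec (Sum.elim z.1 z.2) ∘ Sum.inl, S.mulVec (Sum.elim z.1 z.2) ∘ Sum.inr)

/-- The quadratic form `W(x,x') = ½⟨Px,x⟩ - ⟨Lx,x'⟩ + ½⟨Qx',x'⟩`. -/
noncomputable def Wform {n : ℕ} (P L Q : Matrix (Fin n) (Fin n) ℝ)
    (x x' : Fin n → ℝ) : ℝ :=
  (1 / 2 : ℝ) * (P.mulVec x ⬝ᵥ x) - L.mulVec x ⬝ᵥ x' + (1 / 2 : ℝ) * (Q.mulVec x' ⬝ᵥ x')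

/-- The quadratic Fourier transform
`Ŝf(x) = c (2π)^{-n/2} |det L|^{1/2} ∫ e^{iW(x,x')} f(x') dx'`. -/
noncomputable def quadFourier {n : ℕ} (c : ℂ) (P L Q : Matrix (Fin n) (Fin n) ℝ)
    (f : (Fin n → ℝ) → ℂ) : (Fin n → ℝ) → ℂ := fun x =>
  c * ((2 * Real.pi) ^ (-(n : ℝ) / 2) : ℝ) * (Real.sqrt |L.det| : ℝ) *
    ∫ x' : Fin n → ℝ, Complex.exp (Complex.I * (Wform P L Q x x' : ℝ)) * f x'


private lemma symm_dot {n : ℕ} {M : Matrix (Fin n) (Fin n) ℝ} (hM : Mᵀ = M)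
    (u v : Fin n → ℝ) : M.mulVec u ⬝ᵥ v = M.mulVec v ⬝ᵥ u := by
  rw [dotProduct_comm, Matrix.dotProduct_mulVec, ← Matrix.mulVec_transpose, hM]

private lemma transpose_dot {n : ℕ} (M : Matrix (Fin n) (Fin n) ℝ)
    (u v : Fin n → ℝ) : Mᵀ.mulVec u ⬝ᵥ v = M.mulVec v ⬝ᵥ u := by
  rw [Matrix.mulVec_transpose, ← Matrix.dotProduct_mulVec, dotProduct_comm]

private lemma phase_eq {n : ℕ} (P L Q : Matrix (Fin n) (Fin n) ℝ)
    (hP : Pᵀ = P) (hQ : Qᵀ = Q) (x x' x₀ p₀ a b : Fin n → ℝ)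
    (ha : L.mulVec a = Q.mulVec x₀ + p₀)
    (hb : b = P.mulVec a - Lᵀ.mulVec x₀) :
    Wform P L Q x (x' + x₀) + (p₀ ⬝ᵥ (x' + x₀) - (1 / 2 : ℝ) * (p₀ ⬝ᵥ x₀))
      = (b ⬝ᵥ x - (1 / 2 : ℝ) * (b ⬝ᵥ a)) + Wform P L Q (x - a) x' := by
  subst hb
  have h1 : Q.mulVec x₀ ⬝ᵥ x' = Q.mulVec x' ⬝ᵥ x₀ := symm_dot hQ x₀ x'
  have h2 : P.mulVec a ⬝ᵥ x = P.mulVec x ⬝ᵥ a := symm_dot hP a x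
  have h3 : Lᵀ.mulVec x₀ ⬝ᵥ x = L.mulVec x ⬝ᵥ x₀ := transpose_dot L x₀ x
  have h4 : Lᵀ.mulVec x₀ ⬝ᵥ a = Q.mulVec x₀ ⬝ᵥ x₀ + p₀ ⬝ᵥ x₀ := by
    rw [transpose_dot L x₀ a, ha, add_dotProduct]
  have h5 : L.mulVec a ⬝ᵥ x' = Q.mulVec x₀ ⬝ᵥ x' + p₀ ⬝ᵥ x' := by
    rw [ha, add_dotProduct]
  simp only [Wform, Matrix.mulVec_add, Matrix.mulVec_sub, dotProduct_add,
    add_dotProduct, dotProduct_sub, sub_dotProduct]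
  linarith [h1, h2, h3, h4, h5]

/-- metaplectic covariance `Ŝ(T(z)f) = T(S_W z)(Ŝf)` for Schwartz `f`. -/
theorem quadFourier_metaplectic_covariance {n : ℕ} (P L Q : Matrix (Fin n) (Fin n) ℝ)
    (hP : Pᵀ = P) (hQ : Qᵀ = Q) (hL : L.det ≠ 0) (c : ℂ) (hc : ‖c‖ = 1)
    (z : (Fin n → ℝ) × (Fin n → ℝ)) (f : SchwartzMap (Fin n → ℝ) ℂ) (x : Fin n → ℝ) :
    quadFourier c P L Q (heisenbergWeyl z ⇑f) x
      = heisenbergWeyl (matAction (freeSymplectic P L Q) z) (quadFourier c P L Q ⇑f) x := by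
  obtain ⟨x₀, p₀⟩ := z
  set a : Fin n → ℝ := (L⁻¹ * Q).mulVec x₀ + L⁻¹.mulVec p₀ with ha_def
  set b : Fin n → ℝ := (P * L⁻¹ * Q - Lᵀ).mulVec x₀ + (P * L⁻¹).mulVec p₀ with hb_def
  have hLinv : L * L⁻¹ = 1 := Matrix.mul_nonsing_inv L (isUnit_iff_ne_zero.mpr hL)
  have hmat : matAction (freeSymplectic P L Q) (x₀, p₀) = (a, b) := by
    simp only [matAction, freeSymplectic, Matrix.fromBlocks_mulVec]
    refine Prod.ext ?_ ?_ <;> ext i <;>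
      simp [Sum.elim_comp_inl, Sum.elim_comp_inr, ha_def, hb_def]
  have ha : L.mulVec a = Q.mulVec x₀ + p₀ := by
    rw [ha_def, Matrix.mulVec_add, Matrix.mulVec_mulVec, Matrix.mulVec_mulVec,
      ← Matrix.mul_assoc, hLinv, Matrix.one_mul]
    simp
  have hb : b = P.mulVec a - Lᵀ.mulVec x₀ := by
    rw [hb_def, ha_def, Matrix.mulVec_add, Matrix.sub_mulVec, Matrix.mulVec_mulVec,
      Matrix.mulVec_mulVec, Matrix.mul_assoc P L⁻¹ Q]
    abel
  rw [hmat]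
  simp only [quadFourier, heisenbergWeyl]
  have hshift :
      (∫ x' : Fin n → ℝ, Complex.exp (Complex.I * (Wform P L Q x x' : ℝ)) *
        (Complex.exp (Complex.I * ((p₀ ⬝ᵥ x' : ℝ) - (1 / 2 : ℝ) * (p₀ ⬝ᵥ x₀ : ℝ))) *
          f (x' - x₀)))
      = Complex.exp (Complex.I * ((b ⬝ᵥ x : ℝ) - (1 / 2 : ℝ) * (b ⬝ᵥ a : ℝ))) *
        ∫ x' : Fin n → ℝ, Complex.exp (Complex.I * (Wform P L Q (x - a) x' : ℝ)) * f x' := by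
    rw [← integral_const_mul]
    rw [← integral_add_right_eq_self (fun x' => Complex.exp (Complex.I * (Wform P L Q x x' : ℝ)) *
        (Complex.exp (Complex.I * ((p₀ ⬝ᵥ x' : ℝ) - (1 / 2 : ℝ) * (p₀ ⬝ᵥ x₀ : ℝ))) *
          f (x' - x₀))) x₀]
    congr 1
    ext x'
    have key := phase_eq P L Q hP hQ x x' x₀ p₀ a b ha hb
    have hxx : (x' + x₀) - x₀ = x' := by abel
    rw [hxx, ← mul_assoc, ← Complex.exp_add, ← mul_assoc, ← Complex.exp_add,
      ← mul_add, ← mul_add]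
    congr 2
    have key' := congrArg (fun t : ℝ => Complex.I * (t : ℂ)) key
    push_cast at key' ⊢
    convert key' using 2
  rw [hshift]
  ring
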